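/- Assume G(x,y) does not depend on y, and for every x ∈ X the functions y ↦ f(x,y) and y ↦ g_i(x,y), i = 1,…,q, are convex and continuously differentiable. If (x̄,ȳ) is a global optimal solution of the bilevel problem (P) and the LMFCQ holds at (x̄,y) for every y ∈ S(x̄), then for every z ∈ Λ(x̄,ȳ) the point (x̄,ȳ,z) is a global optimal solution of (KKTR). -/

import Mathlib

/-- `Vec k` is the Euclidean space `ℝ^k`. -/
abbrev Vec (k : ℕ) := Fin k → ℝ

lemma convex_global_min {m : ℕ} {h : Vec m → ℝ} (hc : ConvexOn ℝ Set.univ h)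
    (hd : Differentiable ℝ h) (a : Vec m) (h0 : fderiv ℝ h a = 0) (b : Vec m) :
    h a ≤ h b := by
  set L : ℝ →ᵃ[ℝ] Vec m := AffineMap.lineMap a b with hL
  have hφc : ConvexOn ℝ Set.univ (h ∘ L) := by
    have := hc.comp_affineMap L
    simpa using this
  set φ : ℝ → ℝ := h ∘ L with hφ
  have hcurve : ∀ t : ℝ, L t = a + t • (b - a) := by
    intro t; simp [hL, AffineMap.lineMap_apply]; abel
  have hder : HasDerivAt (fun t : ℝ => a + t • (b - a)) (b - a) 0 := by
    simpa using ((hasDerivAt_id (0:ℝ)).smul_const (b - a)).const_add a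
  have hφd : HasDerivAt φ 0 0 := by
    have h1 : HasDerivAt (fun t : ℝ => h (a + t • (b - a))) (fderiv ℝ h a (b - a)) 0 := by
      have := (hd (a + (0:ℝ) • (b - a))).hasFDerivAt.comp_hasDerivAt 0 hder
      simp only [zero_smul, add_zero] at this
      exact this
    have : HasDerivAt (fun t : ℝ => h (a + t • (b - a))) 0 0 := by
      simpa [h0] using h1
    apply this.congr_of_eventuallyEq
    filter_upwards with t
    simp [hφ, hcurve t]
  have key := hφc.deriv_le_slope (Set.mem_univ (0:ℝ)) (Set.mem_univ (1:ℝ)) zero_lt_one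
    hφd.differentiableAt
  rw [hφd.deriv] at key
  have hs : slope φ 0 1 = h b - h a := by
    simp [slope, hφ, hcurve]
  rw [hs] at key
  linarith

/-- Under lower-level convexity, smoothness and LMFCQ, a global
optimal solution `(x̄, ȳ)` of the bilevel problem (P) together with any lower-level
Lagrange multiplier `z ∈ Λ(x̄, ȳ)` yields a global optimal solution `(x̄, ȳ, z)` of
the KKT reformulation (KKTR). -/
theorem stmt_0
    {n m p q : ℕ} (hn : 0 < n) (hm : 0 < m) (hp : 0 < p) (hq : 0 < q)
    (F : Vec n → Vec m → ℝ) (G : Vec n → Vec m → Vec p)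
    (f : Vec n → Vec m → ℝ) (g : Vec n → Vec m → Vec q)
    -- G does not depend on y
    (hGy : ∀ x y y', G x y = G x y')
    -- for every x ∈ X, the lower-level data is convex and C¹ in y
    (hconv : ∀ x : Vec n, (∃ y, ∀ j, G x y j ≤ 0) →
      ConvexOn ℝ Set.univ (f x) ∧ ContDiff ℝ 1 (f x) ∧
      ∀ i, ConvexOn ℝ Set.univ (fun y => g x y i) ∧ ContDiff ℝ 1 (fun y => g x y i))
    -- standing assumption: S(x) ≠ ∅ for every x ∈ X
    (hS : ∀ x : Vec n, (∃ y, ∀ j, G x y j ≤ 0) →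
      ∃ y, (∀ i, g x y i ≤ 0) ∧ ∀ y', (∀ i, g x y' i ≤ 0) → f x y ≤ f x y')
    (xb : Vec n) (yb : Vec m)
    -- (xb, yb) is feasible for (P) : G ≤ 0 and yb ∈ S(xb)
    (hPfeas : (∀ j, G xb yb j ≤ 0) ∧ (∀ i, g xb yb i ≤ 0) ∧
      ∀ y', (∀ i, g xb y' i ≤ 0) → f xb yb ≤ f xb y')
    -- (xb, yb) is globally optimal for (P)
    (hPopt : ∀ x y, (∀ j, G x y j ≤ 0) → (∀ i, g x y i ≤ 0) →
      (∀ y', (∀ i, g x y' i ≤ 0) → f x y ≤ f x y') → F xb yb ≤ F x y)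
    -- LMFCQ holds at (xb, y) for every y ∈ S(xb)
    (hLMFCQ : ∀ y : Vec m, (∀ i, g xb y i ≤ 0) →
      (∀ y', (∀ i, g xb y' i ≤ 0) → f xb y ≤ f xb y') →
      ∃ d : Vec m, ∀ i, g xb y i = 0 → fderiv ℝ (fun y' => g xb y' i) y d < 0)
    -- z ∈ Λ(xb, yb)
    (z : Vec q)
    (hz1 : fderiv ℝ (f xb) yb + ∑ i, z i • fderiv ℝ (fun y' => g xb y' i) yb = 0)
    (hz2 : ∀ i, 0 ≤ z i) (hz3 : ∀ i, g xb yb i ≤ 0)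
    (hz4 : ∑ i, z i * g xb yb i = 0) :
    -- (xb, yb, z) is a global optimal solution of (KKTR)
    ((∀ j, G xb yb j ≤ 0) ∧
      (fderiv ℝ (f xb) yb + ∑ i, z i • fderiv ℝ (fun y' => g xb y' i) yb = 0) ∧
      (∀ i, g xb yb i ≤ 0) ∧ (∀ i, 0 ≤ z i) ∧ ∑ i, z i * g xb yb i = 0) ∧
    ∀ (x : Vec n) (y : Vec m) (z' : Vec q), (∀ j, G x y j ≤ 0) →
      (fderiv ℝ (f x) y + ∑ i, z' i • fderiv ℝ (fun y' => g x y' i) y = 0) →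
      (∀ i, g x y i ≤ 0) → (∀ i, 0 ≤ z' i) → (∑ i, z' i * g x y i = 0) →
      F xb yb ≤ F x y := by
  refine ⟨⟨hPfeas.1, hz1, hz3, hz2, hz4⟩, ?_⟩
  intro x y z' hG hkkt hgle hz'nn hcs
  obtain ⟨hfconv, hfC1, hg⟩ := hconv x ⟨y, hG⟩
  set L : Vec m → ℝ := fun y' => f x y' + ∑ i, z' i * g x y' i with hLdef
  have hLconv : ConvexOn ℝ Set.univ L := by
    apply hfconv.add
    have hsum : ∀ (s : Finset (Fin q)),
        ConvexOn ℝ Set.univ (fun y' => ∑ i ∈ s, z' i * g x y' i) := by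
      intro s
      induction s using Finset.induction with
      | empty => simpa using convexOn_const (0:ℝ) convex_univ
      | insert a s hnot ih =>
        have := ((hg a).1.smul (hz'nn a)).add ih
        simpa [Finset.sum_insert hnot, smul_eq_mul, Pi.add_def] using this
    exact hsum Finset.univ
  have hgd : ∀ i, Differentiable ℝ (fun y' => g x y' i) :=
    fun i => (hg i).2.differentiable one_ne_zero
  have hfd : Differentiable ℝ (f x) := hfC1.differentiable one_ne_zero
  have hLder : HasFDerivAt L
      (fderiv ℝ (f x) y + ∑ i, z' i • fderiv ℝ (fun y' => g x y' i) y) y := by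
    apply (hfd y).hasFDerivAt.add
    exact HasFDerivAt.fun_sum fun i _ => by
      simpa [smul_eq_mul] using ((hgd i y).hasFDerivAt.const_mul (z' i))
  have hLfderiv : fderiv ℝ L y = 0 := by rw [hLder.fderiv, hkkt]
  have hLdiff : Differentiable ℝ L :=
    hfd.add (Differentiable.fun_sum fun i _ => (hgd i).const_mul (z' i))
  have hmin := convex_global_min hLconv hLdiff y hLfderiv
  refine hPopt x y hG hgle ?_
  intro y' hy'
  have h1 := hmin y'
  have h2 : L y = f x y := by simp [hLdef, hcs]
  have h3 : ∑ i, z' i * g x y' i ≤ 0 :=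
    Finset.sum_nonpos fun i _ => mul_nonpos_of_nonneg_of_nonpos (hz'nn i) (hy' i)
  simp only [hLdef] at h1 h2
  linarith
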